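/- arXiv:1810.03825 — 2 statements merged into one kernel-verified Lean document; each statement's English description precedes it below -/
import Mathlib

section
/- Sufficient envelope condition for the truncated-Lebesgue measure: let t, λ > 0, c = (1/t)exp(t²/2 − 1), and A(x) = e^{-x²/2} + c∫_{t-x}^∞ e^{-y²/2} dy for x ≥ 0. Then A'(x) = c·e^{-(t-x)²/2} − x·e^{-x²/2} ≥ 0 for all x ≥ 0, and hence A(x) ≥ A(0) ≥ 1 for all x ≥ 0. -/
open MeasureTheory Real

/-- Sufficient envelope condition for the truncated-Lebesgue
measure: with `t > 0`, `c = (1/t)e^{t²/2 - 1}` and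
`A(x) = e^{-x²/2} + c ∫_{t-x}^∞ e^{-y²/2} dy`, the derivative
`A'(x) = c e^{-(t-x)²/2} - x e^{-x²/2}` is nonnegative on `x ≥ 0`, and hence
`A(x) ≥ A(0) ≥ 1` for all `x ≥ 0`. -/
theorem spike_tails_derivative_nonneg (t : ℝ) (ht : 0 < t) :
    (∀ x : ℝ, 0 ≤ x →
      HasDerivAt (fun x : ℝ =>
          Real.exp (-x ^ 2 / 2)
            + (1 / t) * Real.exp (t ^ 2 / 2 - 1)
              * ∫ y in Set.Ici (t - x), Real.exp (-y ^ 2 / 2))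
        ((1 / t) * Real.exp (t ^ 2 / 2 - 1) * Real.exp (-(t - x) ^ 2 / 2)
          - x * Real.exp (-x ^ 2 / 2)) x) ∧
    (∀ x : ℝ, 0 ≤ x →
      0 ≤ (1 / t) * Real.exp (t ^ 2 / 2 - 1) * Real.exp (-(t - x) ^ 2 / 2)
          - x * Real.exp (-x ^ 2 / 2)) ∧
    1 ≤ Real.exp (-(0 : ℝ) ^ 2 / 2)
          + (1 / t) * Real.exp (t ^ 2 / 2 - 1)
            * ∫ y in Set.Ici (t - 0), Real.exp (-y ^ 2 / 2) ∧
    (∀ x : ℝ, 0 ≤ x →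
      Real.exp (-(0 : ℝ) ^ 2 / 2)
          + (1 / t) * Real.exp (t ^ 2 / 2 - 1)
            * ∫ y in Set.Ici (t - 0), Real.exp (-y ^ 2 / 2)
        ≤ Real.exp (-x ^ 2 / 2)
          + (1 / t) * Real.exp (t ^ 2 / 2 - 1)
            * ∫ y in Set.Ici (t - x), Real.exp (-y ^ 2 / 2)) := by
  set c : ℝ := (1 / t) * Real.exp (t ^ 2 / 2 - 1) with hc
  set f : ℝ → ℝ := fun y => Real.exp (-y ^ 2 / 2) with hfdef
  have hcont : Continuous f := by
    apply Real.continuous_exp.comp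
    fun_prop
  have hint : Integrable f := by
    rw [hfdef]
    have e : (fun y : ℝ => Real.exp (-y ^ 2 / 2)) = fun y : ℝ => Real.exp (-(1/2) * y ^ 2) := by
      funext y
      congr 1
      ring
    rw [e]
    exact integrable_exp_neg_mul_sq (by norm_num)
  -- rewrite the Ici integral as a constant plus an interval integral
  have hrw : ∀ x : ℝ, (∫ y in Set.Ici (t - x), f y)
      = ((∫ y, f y) - ∫ y in Set.Iic t, f y) + ∫ y in (t - x)..t, f y := by
    intro x
    have e1 : (∫ y in Set.Ici (t - x), f y) = ∫ y in Set.Ioi (t - x), f y :=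
      integral_Ici_eq_integral_Ioi
    have e2 : (∫ y in Set.Iic (t - x), f y) + ∫ y in Set.Ioi (t - x), f y = ∫ y, f y :=
      intervalIntegral.integral_Iic_add_Ioi hint.integrableOn hint.integrableOn
    have e3 : (∫ y in Set.Iic t, f y) - ∫ y in Set.Iic (t - x), f y = ∫ y in (t - x)..t, f y :=
      intervalIntegral.integral_Iic_sub_Iic hint.integrableOn hint.integrableOn
    linarith
  -- the derivative statement, for every real x
  have key : ∀ x : ℝ, HasDerivAt (fun x : ℝ =>
      Real.exp (-x ^ 2 / 2) + c * ∫ y in Set.Ici (t - x), f y)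
      (c * Real.exp (-(t - x) ^ 2 / 2) - x * Real.exp (-x ^ 2 / 2)) x := by
    intro x
    have h1 : HasDerivAt (fun x : ℝ => Real.exp (-x ^ 2 / 2))
        (-x * Real.exp (-x ^ 2 / 2)) x := by
      have hinner : HasDerivAt (fun x : ℝ => -x ^ 2 / 2) (-x) x := by
        have := ((hasDerivAt_pow 2 x).neg).div_const 2
        refine this.congr_deriv (Eq.symm ?_)
        push_cast
        ring
      have := (Real.hasDerivAt_exp (-x ^ 2 / 2)).comp x hinner
      refine this.congr_deriv (Eq.symm ?_)
      ring
    have hL : HasDerivAt (fun u : ℝ => ∫ y in u..t, f y) (-f (t - x)) (t - x) :=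
      intervalIntegral.integral_hasDerivAt_left hint.intervalIntegrable
        (hcont.stronglyMeasurable.stronglyMeasurableAtFilter)
        hcont.continuousAt
    have hminus : HasDerivAt (fun x : ℝ => t - x) (-1) x := by
      simpa using (hasDerivAt_id x).const_sub t
    have h3 : HasDerivAt (fun x : ℝ => ∫ y in (t - x)..t, f y) (f (t - x)) x := by
      have := hL.comp x hminus
      refine this.congr_deriv (Eq.symm ?_)
      ring
    have h4 := h1.add (((h3.const_add ((∫ y, f y) - ∫ y in Set.Iic t, f y)).const_mul c))
    have hfun : (fun x : ℝ => Real.exp (-x ^ 2 / 2) + c * ∫ y in Set.Ici (t - x), f y)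
        = fun x : ℝ => Real.exp (-x ^ 2 / 2)
            + c * (((∫ y, f y) - ∫ y in Set.Iic t, f y) + ∫ y in (t - x)..t, f y) := by
      funext x
      rw [hrw x]
    rw [hfun]
    refine h4.congr_deriv (Eq.symm ?_)
    show c * Real.exp (-(t - x) ^ 2 / 2) - x * Real.exp (-x ^ 2 / 2)
        = -x * Real.exp (-x ^ 2 / 2) + c * f (t - x)
    simp only [hfdef]
    ring
  -- nonnegativity of the derivative
  have nonneg : ∀ x : ℝ, 0 ≤ x →
      0 ≤ c * Real.exp (-(t - x) ^ 2 / 2) - x * Real.exp (-x ^ 2 / 2) := by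
    intro x hx
    have h1 : t * x ≤ Real.exp (t * x - 1) := by
      have := Real.add_one_le_exp (t * x - 1)
      linarith
    have h2 : x ≤ (1 / t) * Real.exp (t * x - 1) := by
      rw [one_div, inv_mul_eq_div, le_div_iff₀ ht]
      linarith
    have h3 : x * Real.exp (-x ^ 2 / 2)
        ≤ ((1 / t) * Real.exp (t * x - 1)) * Real.exp (-x ^ 2 / 2) :=
      mul_le_mul_of_nonneg_right h2 (Real.exp_nonneg _)
    have h4 : ((1 / t) * Real.exp (t * x - 1)) * Real.exp (-x ^ 2 / 2)
        = c * Real.exp (-(t - x) ^ 2 / 2) := by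
      rw [hc, mul_assoc, ← Real.exp_add, mul_assoc, ← Real.exp_add]
      congr 2
      ring
    linarith [h4 ▸ h3]
  -- value at 0 is at least 1
  have base : 1 ≤ Real.exp (-(0 : ℝ) ^ 2 / 2)
      + c * ∫ y in Set.Ici (t - 0), f y := by
    have hI : 0 ≤ ∫ y in Set.Ici (t - 0), f y :=
      setIntegral_nonneg measurableSet_Ici fun y _ => Real.exp_nonneg _
    have hc0 : 0 ≤ c := by positivity
    have : Real.exp (-(0 : ℝ) ^ 2 / 2) = 1 := by norm_num
    nlinarith [mul_nonneg hc0 hI]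
  refine ⟨fun x _ => key x, nonneg, base, ?_⟩
  -- monotonicity
  have mono : MonotoneOn (fun x : ℝ =>
      Real.exp (-x ^ 2 / 2) + c * ∫ y in Set.Ici (t - x), f y) (Set.Ici 0) := by
    apply monotoneOn_of_deriv_nonneg (convex_Ici 0)
    · exact Continuous.continuousOn (by
        exact continuous_iff_continuousAt.mpr fun x => (key x).differentiableAt.continuousAt)
    · intro x _
      exact (key x).differentiableAt.differentiableWithinAt
    · intro x hx
      rw [(key x).deriv]
      exact nonneg x (le_of_lt (by simpa using hx))
  intro x hx
  exact mono (Set.self_mem_Ici) hx hx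
end

section
/- Exact Shtarkov complexity of the 1-dimensional ℓ₁-penalized Gaussian location model: with f_X(θ) = (1/2)(X-θ)² + (1/2)ln(2π) and γ(θ) = λ|θ| (λ > 0), the Shtarkov integral satisfies ∫_ℝ e^{-inf_θ(f_X(θ)+γ(θ))} dX = 2Φ(λ) − 1 + √(2/π)·e^{-λ²/2}/λ, where Φ is the standard normal CDF. -/
open MeasureTheory Real

/-- Standard normal CDF. -/
noncomputable def stdNormalCdf (l : ℝ) : ℝ :=
  ∫ y in Set.Iic l, Real.exp (-y ^ 2 / 2) / Real.sqrt (2 * Real.pi)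

open Set Filter

lemma soft_inf (lam X : ℝ) (hlam : 0 < lam) :
    (⨅ θ : ℝ, ((X - θ) ^ 2 / 2 + Real.log (2 * Real.pi) / 2 + lam * |θ|))
      = (if |X| ≤ lam then X ^ 2 / 2 else lam * |X| - lam ^ 2 / 2)
        + Real.log (2 * Real.pi) / 2 := by
  set c := Real.log (2 * Real.pi) / 2 with hc
  set m := (if |X| ≤ lam then X ^ 2 / 2 else lam * |X| - lam ^ 2 / 2) with hm
  have hlb : ∀ θ : ℝ, m + c ≤ (X - θ) ^ 2 / 2 + c + lam * |θ| := by
    intro θ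
    have h1 : X * θ ≤ |X| * |θ| := by
      calc X * θ ≤ |X * θ| := le_abs_self _
      _ = |X| * |θ| := abs_mul _ _
    have h2 : |X| - |θ| ≤ |X - θ| := abs_sub_abs_le_abs_sub _ _
    have h3 : (|X - θ| - lam) ^ 2 ≥ 0 := sq_nonneg _
    have h4 : |X - θ| ^ 2 = (X - θ) ^ 2 := sq_abs _
    by_cases h : |X| ≤ lam
    · rw [hm, if_pos h]
      nlinarith [abs_nonneg θ, sq_nonneg θ]
    · rw [hm, if_neg h]
      push_neg at h
      nlinarith
  have hbdd : BddBelow (Set.range fun θ : ℝ =>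
      (X - θ) ^ 2 / 2 + c + lam * |θ|) := by
    refine ⟨m + c, ?_⟩
    rintro _ ⟨θ, rfl⟩
    exact hlb θ
  apply le_antisymm
  · by_cases h : |X| ≤ lam
    · have := ciInf_le hbdd 0
      simpa [hm, if_pos h] using this
    · push_neg at h
      rcases le_or_gt 0 X with hX | hX
      · have := ciInf_le hbdd (X - lam)
        have hXabs : |X| = X := abs_of_nonneg hX
        have habs : |X - lam| = X - lam := by
          rw [abs_of_nonneg]; rw [hXabs] at h; linarith
        rw [hm, if_neg (not_le.mpr h)]
        calc (⨅ θ : ℝ, ((X - θ) ^ 2 / 2 + c + lam * |θ|))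
            ≤ (X - (X - lam)) ^ 2 / 2 + c + lam * |X - lam| := this
          _ = lam * |X| - lam ^ 2 / 2 + c := by rw [habs, hXabs]; ring
      · have := ciInf_le hbdd (X + lam)
        have hXabs : |X| = -X := abs_of_neg hX
        have habs : |X + lam| = -(X + lam) := by
          rw [abs_of_neg]; rw [hXabs] at h; linarith
        rw [hm, if_neg (not_le.mpr h)]
        calc (⨅ θ : ℝ, ((X - θ) ^ 2 / 2 + c + lam * |θ|))
            ≤ (X - (X + lam)) ^ 2 / 2 + c + lam * |X + lam| := this
          _ = lam * |X| - lam ^ 2 / 2 + c := by rw [habs, hXabs]; ring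
  · exact le_ciInf hlb

lemma exp_tail_Ioi {b : ℝ} (hb : 0 < b) (a : ℝ) :
    ∫ x in Ioi a, Real.exp (-(b * x)) = Real.exp (-(b * a)) / b := by
  have hderiv : ∀ x ∈ Ici a,
      HasDerivAt (fun x => -Real.exp (-(b * x)) / b) (Real.exp (-(b * x))) x := by
    intro x _
    have h1 : HasDerivAt (fun x : ℝ => -(b * x)) (-b) x := by
      simpa using ((hasDerivAt_id x).const_mul b).fun_neg
    have := (h1.exp).fun_neg.div_const b
    refine this.congr_deriv ?_
    field_simp
  have hint : IntegrableOn (fun x => Real.exp (-(b * x))) (Ioi a) := by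
    simpa [neg_mul] using exp_neg_integrableOn_Ioi a hb
  have htend : Tendsto (fun x => -Real.exp (-(b * x)) / b) atTop (nhds 0) := by
    have h0 : Tendsto (fun x : ℝ => -(b * x)) atTop atBot := by
      simpa [neg_mul, mul_comm] using tendsto_id.const_mul_atTop_of_neg
        (neg_neg_iff_pos.2 hb) |>.comp (tendsto_id : Tendsto (fun x : ℝ => x) atTop atTop)
    have := ((tendsto_exp_atBot.comp h0).neg).div_const b
    simpa using this
  have := integral_Ioi_of_hasDerivAt_of_tendsto' hderiv hint htend
  rw [this]
  field_simp
  ring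

lemma exp_tail_Iic {b : ℝ} (hb : 0 < b) (a : ℝ) :
    ∫ x in Iic a, Real.exp (b * x) = Real.exp (b * a) / b := by
  have h := integral_comp_neg_Iic a (fun t : ℝ => Real.exp (-(b * t)))
  simp only [mul_neg, neg_neg] at h
  rw [h, exp_tail_Ioi hb]
  ring_nf

lemma integrableOn_exp_mul_Iic' {b : ℝ} (hb : 0 < b) (a : ℝ) :
    IntegrableOn (fun x : ℝ => Real.exp (b * x)) (Iic a) := by
  have A : MeasurableEmbedding (fun x : ℝ => -x) :=
    (Homeomorph.neg ℝ).isClosedEmbedding.measurableEmbedding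
  have h : IntegrableOn (fun x : ℝ => Real.exp (-b * x)) (Ioi (-a)) :=
    exp_neg_integrableOn_Ioi (-a) hb
  have key : IntegrableOn (fun x : ℝ => Real.exp (b * x)) (Iio a) := by
    rw [IntegrableOn, show (volume : Measure ℝ) = Measure.map (fun x : ℝ => -x) volume from
      (Measure.map_neg_eq_self _).symm, Measure.restrict_map A.measurable measurableSet_Iio]
    rw [A.integrable_map_iff]
    have hs : (fun x : ℝ => -x) ⁻¹' (Iio a) = Ioi (-a) := by ext x; simp [lt_neg]
    rw [hs]
    refine h.congr_fun (fun x _ => ?_) measurableSet_Ioi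
    show Real.exp (-b * x) = Real.exp (b * -x); ring_nf
  exact key.congr_set_ae Iio_ae_eq_Iic.symm

lemma gauss_total : ∫ x : ℝ, Real.exp (-x ^ 2 / 2) = Real.sqrt (2 * Real.pi) := by
  have h := integral_gaussian (1/2 : ℝ)
  have heq : (fun x : ℝ => Real.exp (-(1/2 : ℝ) * x ^ 2)) = fun x : ℝ => Real.exp (-x ^ 2 / 2) := by
    funext x; congr 1; ring
  rw [heq] at h
  rw [h]
  congr 1
  rw [div_div_eq_mul_div, mul_comm]
  norm_num

lemma gauss_integrable : Integrable (fun x : ℝ => Real.exp (-x ^ 2 / 2)) := by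
  have h := integrable_exp_neg_mul_sq (b := 1/2) (by norm_num)
  have heq : (fun x : ℝ => Real.exp (-(1/2 : ℝ) * x ^ 2)) = fun x : ℝ => Real.exp (-x ^ 2 / 2) := by
    funext x; congr 1; ring
  rwa [heq] at h

lemma gauss_reflect (l : ℝ) :
    ∫ x in Iic (-l), Real.exp (-x ^ 2 / 2) = ∫ x in Ioi l, Real.exp (-x ^ 2 / 2) := by
  have h := integral_comp_neg_Iic (-l) (fun x : ℝ => Real.exp (-x ^ 2 / 2))
  simp only [neg_neg] at h
  rw [← h]
  refine setIntegral_congr_fun measurableSet_Iic (fun x _ => ?_)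
  simp [neg_sq]

/-- Exact Shtarkov complexity of the one-dimensional
ℓ₁-penalized Gaussian location model: with `f_X(θ) = (1/2)(X-θ)² + (1/2)ln 2π`
and `γ(θ) = λ|θ|`, the Shtarkov integral equals
`2Φ(λ) - 1 + √(2/π) e^{-λ²/2}/λ`. -/
theorem shtarkov_gaussian_l1 (lam : ℝ) (hlam : 0 < lam) :
    (∫ X : ℝ, Real.exp (-(⨅ θ : ℝ,
        ((X - θ) ^ 2 / 2 + Real.log (2 * Real.pi) / 2 + lam * |θ|))))
      = 2 * stdNormalCdf lam - 1
        + Real.sqrt (2 / Real.pi) * Real.exp (-lam ^ 2 / 2) / lam := by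
  have hpi : (0:ℝ) < 2 * Real.pi := by positivity
  set s := Real.sqrt (2 * Real.pi) with hs
  have hspos : 0 < s := Real.sqrt_pos.2 hpi
  -- exp(-c) = s⁻¹
  have hek : Real.exp (-(Real.log (2 * Real.pi) / 2)) = s⁻¹ := by
    rw [Real.exp_neg]
    congr 1
    rw [← Real.log_sqrt hpi.le, Real.exp_log hspos]
  set g : ℝ → ℝ := fun X =>
    Real.exp (-(if |X| ≤ lam then X ^ 2 / 2 else lam * |X| - lam ^ 2 / 2)) with hg
  -- rewrite integrand
  have hintegrand : (fun X : ℝ => Real.exp (-(⨅ θ : ℝ,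
      ((X - θ) ^ 2 / 2 + Real.log (2 * Real.pi) / 2 + lam * |θ|))))
      = fun X => g X * s⁻¹ := by
    funext X
    rw [soft_inf lam X hlam, neg_add, Real.exp_add, hek]
  rw [hintegrand, integral_mul_const]
  have hgx : ∀ x : ℝ, g x
      = Real.exp (-(if |x| ≤ lam then x ^ 2 / 2 else lam * |x| - lam ^ 2 / 2)) := fun x => rfl
  have heq1 : ∀ x ∈ Iic (-lam), g x = Real.exp (lam ^ 2 / 2) * Real.exp (lam * x) := by
    intro x hx
    simp only [mem_Iic] at hx
    rw [hgx x, ← Real.exp_add]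
    by_cases h : |x| ≤ lam
    · have hx' : -lam ≤ x := (abs_le.mp h).1
      have : x = -lam := le_antisymm hx hx'
      subst this
      rw [if_pos h]; congr 1; ring
    · rw [if_neg h]
      have hxneg : x < 0 := by
        push_neg at h; by_contra hc; push_neg at hc
        rw [abs_of_nonneg hc] at h; linarith
      rw [abs_of_neg hxneg]; congr 1; ring
  have heq2 : ∀ x ∈ Ioc (-lam) lam, g x = Real.exp (-x ^ 2 / 2) := by
    intro x hx
    have h : |x| ≤ lam := abs_le.mpr ⟨hx.1.le, hx.2⟩
    rw [hgx x, if_pos h]; congr 1; ring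
  have heq3 : ∀ x ∈ Ioi lam, g x = Real.exp (lam ^ 2 / 2) * Real.exp (-(lam * x)) := by
    intro x hx
    simp only [mem_Ioi] at hx
    have h : ¬ |x| ≤ lam := by
      rw [abs_of_pos (lt_trans hlam hx)]; exact not_le.mpr hx
    rw [hgx x, if_neg h, ← Real.exp_add, abs_of_pos (lt_trans hlam hx)]
    congr 1; ring
  -- integrability on the three regions
  have hint1 : IntegrableOn g (Iic (-lam)) := by
    have h1 : IntegrableOn (fun x : ℝ => Real.exp (lam ^ 2 / 2) * Real.exp (lam * x))
        (Iic (-lam)) := (integrableOn_exp_mul_Iic' hlam (-lam)).const_mul _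
    exact h1.congr_fun (fun x hx => (heq1 x hx).symm) measurableSet_Iic
  have hint2 : IntegrableOn g (Ioc (-lam) lam) := by
    refine (gauss_integrable.integrableOn.congr_fun
      (fun x hx => (heq2 x hx).symm) measurableSet_Ioc)
  have hint3 : IntegrableOn g (Ioi lam) := by
    have h : IntegrableOn (fun x : ℝ => Real.exp (-(lam * x))) (Ioi lam) := by
      simpa [neg_mul] using exp_neg_integrableOn_Ioi lam hlam
    have h1 : IntegrableOn (fun x : ℝ => Real.exp (lam ^ 2 / 2) * Real.exp (-(lam * x)))
        (Ioi lam) := h.const_mul _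
    exact h1.congr_fun (fun x hx => (heq3 x hx).symm) measurableSet_Ioi
  have hunion : Iic (-lam) ∪ Ioc (-lam) lam = Iic lam :=
    Set.Iic_union_Ioc_eq_Iic (by linarith)
  have hintIic : IntegrableOn g (Iic lam) := by
    rw [← hunion]; exact hint1.union hint2
  -- split the integral
  have hsplit : ∫ x, g x = (∫ x in Iic (-lam), g x) + (∫ x in Ioc (-lam) lam, g x)
      + ∫ x in Ioi lam, g x := by
    rw [← intervalIntegral.integral_Iic_add_Ioi hintIic hint3, ← hunion,
      setIntegral_union (Iic_disjoint_Ioc le_rfl) measurableSet_Ioc hint1 hint2]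
  -- values
  set E := Real.exp (-lam ^ 2 / 2) with hE
  have hv1 : ∫ x in Iic (-lam), g x = E / lam := by
    rw [setIntegral_congr_fun measurableSet_Iic heq1, integral_const_mul,
      exp_tail_Iic hlam, ← mul_div_assoc, ← Real.exp_add]
    congr 2; ring
  have hv3 : ∫ x in Ioi lam, g x = E / lam := by
    rw [setIntegral_congr_fun measurableSet_Ioi heq3, integral_const_mul,
      exp_tail_Ioi hlam, ← mul_div_assoc, ← Real.exp_add]
    congr 2; ring
  have hv2 : ∫ x in Ioc (-lam) lam, g x
      = (∫ x in Iic lam, Real.exp (-x ^ 2 / 2)) - ∫ x in Iic (-lam), Real.exp (-x ^ 2 / 2) := by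
    rw [setIntegral_congr_fun measurableSet_Ioc heq2]
    have h : (∫ x in Iic lam, Real.exp (-x ^ 2 / 2))
        = (∫ x in Iic (-lam), Real.exp (-x ^ 2 / 2))
          + ∫ x in Ioc (-lam) lam, Real.exp (-x ^ 2 / 2) := by
      rw [← setIntegral_union (Iic_disjoint_Ioc le_rfl) measurableSet_Ioc
        gauss_integrable.integrableOn gauss_integrable.integrableOn, hunion]
    linarith
  have hJr : (∫ x in Iic (-lam), Real.exp (-x ^ 2 / 2))
      = s - ∫ x in Iic lam, Real.exp (-x ^ 2 / 2) := by
    have h1 : (∫ x in Iic lam, Real.exp (-x ^ 2 / 2))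
        + ∫ x in Ioi lam, Real.exp (-x ^ 2 / 2) = s := by
      rw [intervalIntegral.integral_Iic_add_Ioi gauss_integrable.integrableOn
        gauss_integrable.integrableOn]
      exact gauss_total
    have h2 := gauss_reflect lam
    linarith
  have hPhi : stdNormalCdf lam = (∫ x in Iic lam, Real.exp (-x ^ 2 / 2)) / s := by
    rw [stdNormalCdf, ← integral_div]
  have hsq : Real.sqrt (2 / Real.pi) = 2 / s := by
    rw [eq_div_iff hspos.ne', hs, ← Real.sqrt_mul (by positivity),
      show (2 / Real.pi) * (2 * Real.pi) = 4 by field_simp; ring,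
      show (4:ℝ) = 2 ^ 2 by norm_num, Real.sqrt_sq (by norm_num)]
  rw [hsplit, hv1, hv2, hv3, hJr, hPhi, hsq]
  field_simp
  ring
end
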